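/- For odd n and p in [1/2, 1], the majority probability P(n,p) = ∑_{i=⌈n/2⌉}^{n} C(n,i) p^i (1−p)^{n−i} is a concave function of p on the interval [1/2, 1]. -/

import Mathlib

open Finset

noncomputable def Pmaj (n : ℕ) (p : ℝ) : ℝ :=
  ∑ i ∈ Finset.Ioc (n / 2) n, (n.choose i : ℝ) * p ^ i * (1 - p) ^ (n - i)

lemma choose_mul_left (n i : ℕ) (h1 : 1 ≤ i) (h2 : i ≤ n) :
    n.choose i * i = n * (n - 1).choose (i - 1) := by
  obtain ⟨j, rfl⟩ : ∃ j, i = j + 1 := ⟨i - 1, by omega⟩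
  obtain ⟨s, rfl⟩ : ∃ s, n = s + 1 := ⟨n - 1, by omega⟩
  simpa [mul_comm] using (Nat.add_one_mul_choose_eq s j).symm

lemma choose_mul_right (n i : ℕ) (hn : 1 ≤ n) (h2 : i ≤ n) :
    n.choose i * (n - i) = n * (n - 1).choose i := by
  rcases eq_or_lt_of_le h2 with rfl | h
  · have h0 : (i - 1).choose i = 0 := Nat.choose_eq_zero_of_lt (by omega)
    simp [h0]
  · have h1 : 1 ≤ n - i := by omega
    have hni : n - i ≤ n := Nat.sub_le _ _
    calc n.choose i * (n - i) = n.choose (n - i) * (n - i) := by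
          rw [Nat.choose_symm h2]
        _ = n * (n - 1).choose (n - i - 1) := choose_mul_left n (n - i) h1 hni
        _ = n * (n - 1).choose i := by
          congr 1
          have : n - i - 1 = (n - 1) - i := by omega
          rw [this, Nat.choose_symm (by omega)]

lemma hasDerivAt_term (n i : ℕ) (p : ℝ) :
    HasDerivAt (fun p : ℝ => (n.choose i : ℝ) * p ^ i * (1 - p) ^ (n - i))
      ((n.choose i : ℝ) * ((i : ℝ) * p ^ (i - 1) * (1 - p) ^ (n - i)
        + p ^ i * (((n - i : ℕ) : ℝ) * (1 - p) ^ (n - i - 1) * (-1)))) p := by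
  have h1 : HasDerivAt (fun p : ℝ => p ^ i) ((i : ℝ) * p ^ (i - 1)) p := hasDerivAt_pow i p
  have h2 : HasDerivAt (fun p : ℝ => (1 - p) ^ (n - i))
      (((n - i : ℕ) : ℝ) * (1 - p) ^ (n - i - 1) * (-1)) p := by
    have := (hasDerivAt_pow (n - i) (1 - p)).comp p ((hasDerivAt_id p).const_sub 1)
    simpa [Function.comp_def] using this
  have h3 := (h1.mul h2).const_mul ((n.choose i : ℝ))
  have hfun : (fun p : ℝ => (n.choose i : ℝ) * p ^ i * (1 - p) ^ (n - i))
      = fun y : ℝ => (n.choose i : ℝ) * (y ^ i * (1 - y) ^ (n - i)) := by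
    funext y; ring
  rw [hfun]
  exact h3

lemma Pmaj_hasDerivAt (m : ℕ) (p : ℝ) :
    HasDerivAt (Pmaj (2 * m + 1))
      (((2 * m + 1 : ℕ) : ℝ) * ((2 * m).choose m : ℝ) * (p * (1 - p)) ^ m) p := by
  set n := 2 * m + 1 with hn
  have hm : n / 2 = m := by omega
  set G : ℕ → ℝ := fun j => (n : ℝ) * ((n - 1).choose j : ℝ) * p ^ j * (1 - p) ^ (n - 1 - j)
    with hG
  have hsum : HasDerivAt (Pmaj n) (∑ i ∈ Finset.Ioc (n / 2) n, (G (i - 1) - G i)) p := by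
    have := HasDerivAt.fun_sum (u := Finset.Ioc (n / 2) n)
      (A := fun i (p : ℝ) => (n.choose i : ℝ) * p ^ i * (1 - p) ^ (n - i))
      (A' := fun i => G (i - 1) - G i) (x := p) ?_
    · exact this
    · intro i hi
      rw [Finset.mem_Ioc] at hi
      have h1 : 1 ≤ i := by omega
      have h2 : i ≤ n := hi.2
      have key1 := choose_mul_left n i h1 h2
      have key2 := choose_mul_right n i (by omega) h2
      have e1 : n - 1 - (i - 1) = n - i := by omega
      have e2 : n - 1 - i = n - i - 1 := by omega
      have heq : (n.choose i : ℝ) * ((i : ℝ) * p ^ (i - 1) * (1 - p) ^ (n - i)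
          + p ^ i * (((n - i : ℕ) : ℝ) * (1 - p) ^ (n - i - 1) * (-1)))
          = G (i - 1) - G i := by
        have l1 : (n.choose i : ℝ) * (i : ℝ) = (n : ℝ) * ((n - 1).choose (i - 1) : ℝ) := by
          rw [← Nat.cast_mul, ← Nat.cast_mul, key1]
        have l2 : (n.choose i : ℝ) * ((n - i : ℕ) : ℝ)
            = (n : ℝ) * ((n - 1).choose i : ℝ) := by
          rw [← Nat.cast_mul, ← Nat.cast_mul, key2]
        rw [hG]
        simp only [e1, e2]
        linear_combination (p ^ (i - 1) * (1 - p) ^ (n - i)) * l1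
          - (p ^ i * (1 - p) ^ (n - i - 1)) * l2
      show HasDerivAt (fun p : ℝ => (n.choose i : ℝ) * p ^ i * (1 - p) ^ (n - i))
        (G (i - 1) - G i) p
      rw [← heq]
      exact hasDerivAt_term n i p
  have htel : ∑ i ∈ Finset.Ioc (n / 2) n, (G (i - 1) - G i) = G m - G n := by
    rw [hm]
    have : Finset.Ioc m n = Finset.Ico (m + 1) (n + 1) := by
      ext x; simp [Finset.mem_Ioc, Finset.mem_Ico]
    rw [this, Finset.sum_Ico_eq_sum_range]
    have hcnt : n + 1 - (m + 1) = m + 1 := by omega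
    rw [hcnt]
    have : ∀ j ∈ Finset.range (m + 1),
        G (m + 1 + j - 1) - G (m + 1 + j) = G (m + j) - G (m + (j + 1)) := by
      intro j _
      rw [show m + 1 + j - 1 = m + j by omega, show m + 1 + j = m + (j + 1) by omega]
    rw [Finset.sum_congr rfl this, Finset.sum_range_sub' (fun j => G (m + j))]
    rw [show m + (m + 1) = n by omega, Nat.add_zero]
  have hGn : G n = 0 := by
    simp [hG, Nat.choose_eq_zero_of_lt (show n - 1 < n by omega)]
  have hGm : G m = ((2 * m + 1 : ℕ) : ℝ) * ((2 * m).choose m : ℝ) * (p * (1 - p)) ^ m := by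
    have e3 : n - 1 - m = m := by omega
    have e4 : n - 1 = 2 * m := by omega
    rw [hG]
    simp only [e3]
    simp only [e4, mul_pow]
    ring
  rw [htel, hGn, hGm, sub_zero] at hsum
  exact hsum

/-- For odd `n`, the strict-majority probability is concave in `p` on `[1/2, 1]`. -/
theorem Pmaj_concaveOn (n : ℕ) (hn : Odd n) :
    ConcaveOn ℝ (Set.Icc (1 / 2 : ℝ) 1) (fun p => Pmaj n p) := by
  obtain ⟨m, rfl⟩ : ∃ m, n = 2 * m + 1 := by
    obtain ⟨m, hm⟩ := hn; exact ⟨m, by omega⟩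
  set K : ℝ := ((2 * m + 1 : ℕ) : ℝ) * ((2 * m).choose m : ℝ) with hK
  have hK0 : 0 ≤ K := by positivity
  have hderiv : deriv (Pmaj (2 * m + 1)) = fun p => K * (p * (1 - p)) ^ m := by
    funext p; exact (Pmaj_hasDerivAt m p).deriv
  apply AntitoneOn.concaveOn_of_deriv (convex_Icc _ _)
  · apply Continuous.continuousOn
    unfold Pmaj
    exact continuous_finset_sum _ fun i _ => by fun_prop
  · intro x _
    exact (Pmaj_hasDerivAt m x).differentiableAt.differentiableWithinAt
  · rw [interior_Icc]
    intro x hx y hy hxy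
    simp only [hderiv]
    apply mul_le_mul_of_nonneg_left _ hK0
    apply pow_le_pow_left₀
    · nlinarith [hy.1, hy.2]
    · nlinarith [mul_nonneg (sub_nonneg.2 hxy) (show (0:ℝ) ≤ x + y - 1 by
        nlinarith [hx.1, hy.1])]
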